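/- Let m ≥ 1, let y be a partition of [0,1] of size m, let f : [0,1] → [0,1] be a continuous map which is Markov for y, and let N be the incidence matrix of f with respect to y, regarded as a matrix with natural-number entries. Then for every p ≥ 1 and every j = 1,…,m: every entry of the j-th column of N^p is positive if and only if f^p(I_j) = [0,1]. -/

import Mathlib

open Set Matrix

/-- A partition of `[0,1]` of size `m`: a strictly increasing map
`{0,1,…,m} → ℝ` with first value `0` and last value `1`. -/
structure UnitPartition (m : ℕ) where
  pts : Fin (m + 1) → ℝ
  strictMono : StrictMono pts
  zero : pts 0 = 0
  one : pts (Fin.last m) = 1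

/-- The `j`-th interval `I_j = [y(j-1), y(j)]` of a partition, for `j = 1, …, m`. -/
def UnitPartition.interval {m : ℕ} (y : UnitPartition m) (j : Fin m) : Set ℝ :=
  Set.Icc (y.pts j.castSucc) (y.pts j.succ)

/-- `f` is Markov for the partition `y`. -/
def IsMarkov {m : ℕ} (y : UnitPartition m) (f : ℝ → ℝ) : Prop :=
  ∀ j : Fin m, ∃ a b : Fin (m + 1), a ≤ b ∧
    f '' y.interval j = Set.Icc (y.pts a) (y.pts b)

open Classical in
/-- The incidence matrix of `f` with respect to `y`, with natural-number entries:
`N i j = 1` if `I_i ⊆ f(I_j)` and `0` otherwise. -/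
noncomputable def incidence {m : ℕ} (y : UnitPartition m) (f : ℝ → ℝ) :
    Matrix (Fin m) (Fin m) ℕ :=
  Matrix.of fun i j => if y.interval i ⊆ f '' y.interval j then 1 else 0

open Classical in
/-- The incidence matrix of `f` with respect to `y`, regarded as a real matrix. -/
noncomputable def incidenceR {m : ℕ} (y : UnitPartition m) (f : ℝ → ℝ) :
    Matrix (Fin m) (Fin m) ℝ :=
  Matrix.of fun i j => if y.interval i ⊆ f '' y.interval j then 1 else 0

namespace UnitPartition

variable {m : ℕ} (y : UnitPartition m)

lemma pts_mem (t : Fin (m + 1)) : y.pts t ∈ Set.Icc (0 : ℝ) 1 :=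
  ⟨y.zero ▸ y.strictMono.monotone (Fin.zero_le t),
   y.one ▸ y.strictMono.monotone (Fin.le_last t)⟩

lemma interval_subset (k : Fin m) : y.interval k ⊆ Set.Icc (0 : ℝ) 1 := fun x hx =>
  ⟨le_trans (y.pts_mem k.castSucc).1 hx.1, le_trans hx.2 (y.pts_mem k.succ).2⟩

lemma pts_lt (k : Fin m) : y.pts k.castSucc < y.pts k.succ :=
  y.strictMono (Fin.castSucc_lt_succ : k.castSucc < k.succ)

lemma left_mem (k : Fin m) : y.pts k.castSucc ∈ y.interval k :=
  ⟨le_rfl, (y.pts_lt k).le⟩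

lemma right_mem (k : Fin m) : y.pts k.succ ∈ y.interval k :=
  ⟨(y.pts_lt k).le, le_rfl⟩

lemma not_subset_singleton (k : Fin m) (c : ℝ) : ¬ y.interval k ⊆ {c} := by
  intro h
  have h1 : y.pts k.castSucc = c := h (y.left_mem k)
  have h2 : y.pts k.succ = c := h (y.right_mem k)
  exact (y.pts_lt k).ne (h1.trans h2.symm)

lemma icc_eq_biUnion (a b : Fin (m + 1)) (hab : a < b) :
    Set.Icc (y.pts a) (y.pts b) =
      ⋃ k ∈ Finset.univ.filter (fun k : Fin m => a ≤ k.castSucc ∧ k.succ ≤ b),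
        y.interval k := by
  apply Set.Subset.antisymm
  · intro x hx
    -- take the largest partition point ≤ x among indices in [a, b)
    have hbm : (b : ℕ) ≤ m := Nat.lt_succ_iff.mp b.isLt
    set T : Finset (Fin (m + 1)) :=
      Finset.univ.filter (fun t => a ≤ t ∧ t < b ∧ y.pts t ≤ x) with hT
    have haT : a ∈ T := by simp [hT, hab, hx.1]
    have hTne : T.Nonempty := ⟨a, haT⟩
    set t := T.max' hTne with ht
    have htT : t ∈ T := T.max'_mem hTne
    have htprop : a ≤ t ∧ t < b ∧ y.pts t ≤ x := by simpa [hT] using htT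
    have htm : (t : ℕ) < m := lt_of_lt_of_le htprop.2.1 hbm
    set k : Fin m := ⟨t, htm⟩ with hk
    have hkc : k.castSucc = t := by ext; simp [hk]
    have hks : (k.succ : ℕ) = (t : ℕ) + 1 := by simp [hk]
    have hksb : k.succ ≤ b := by
      rw [Fin.le_def, hks]; exact htprop.2.1
    have hxk : x ≤ y.pts k.succ := by
      by_contra hcon
      push_neg at hcon
      have hltb : k.succ < b := by
        have : y.pts k.succ < y.pts b := lt_of_lt_of_le hcon hx.2
        exact y.strictMono.lt_iff_lt.mp this
      have hkT : k.succ ∈ T := by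
        refine Finset.mem_filter.mpr ⟨Finset.mem_univ _, ?_, hltb, hcon.le⟩
        exact le_trans htprop.1 (by rw [Fin.le_def, hks]; omega)
      have := T.le_max' _ hkT
      rw [← ht] at this
      have : (t : ℕ) + 1 ≤ (t : ℕ) := by rw [← hks]; exact this
      omega
    refine Set.mem_biUnion ?_ ⟨hkc ▸ htprop.2.2, hxk⟩
    refine Finset.mem_filter.mpr ⟨Finset.mem_univ _, hkc ▸ htprop.1, hksb⟩
  · refine Set.iUnion₂_subset fun k hk => ?_
    obtain ⟨_, h1, h2⟩ := Finset.mem_filter.mp hk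
    exact Set.Icc_subset_Icc (y.strictMono.monotone h1) (y.strictMono.monotone h2)

end UnitPartition

lemma incidence_pos_iff {m : ℕ} (y : UnitPartition m) (f : ℝ → ℝ) (i j : Fin m) :
    0 < incidence y f i j ↔ y.interval i ⊆ f '' y.interval j := by
  unfold incidence
  simp only [Matrix.of_apply]
  split_ifs with h <;> simp [h]

lemma key_lemma {m : ℕ} (y : UnitPartition m) (f : ℝ → ℝ)
    (hcont : ContinuousOn f (Set.Icc 0 1))
    (hMarkov : IsMarkov y f) :
    ∀ p : ℕ, 1 ≤ p → ∀ j : Fin m,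
      (∀ i : Fin m,
        (0 < (incidence y f ^ p) i j ↔ y.interval i ⊆ f^[p] '' y.interval j)) ∧
      ((∃ a b : Fin (m + 1), a ≤ b ∧
          f^[p] '' y.interval j = Set.Icc (y.pts a) (y.pts b)) ∨
       (∃ c : ℝ, f^[p] '' y.interval j = {c})) := by
  intro p hp
  induction p, hp using Nat.le_induction with
  | base =>
    intro j
    constructor
    · intro i
      rw [pow_one, Function.iterate_one]
      exact incidence_pos_iff y f i j
    · obtain ⟨a, b, hab, h⟩ := hMarkov j
      exact Or.inl ⟨a, b, hab, by rw [Function.iterate_one]; exact h⟩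
  | succ p hp IH =>
    intro j
    have himg : f^[p + 1] '' y.interval j = f '' (f^[p] '' y.interval j) := by
      rw [Function.iterate_succ', Set.image_comp]
    -- the easy direction: positive entry implies inclusion
    have back : ∀ i : Fin m, 0 < (incidence y f ^ (p + 1)) i j →
        y.interval i ⊆ f^[p + 1] '' y.interval j := by
      intro i hpos
      rw [pow_succ', Matrix.mul_apply] at hpos
      have hex : ∃ k, 0 < incidence y f i k * (incidence y f ^ p) k j := by
        by_contra h
        push_neg at h
        rw [Finset.sum_eq_zero (fun k _ => Nat.le_zero.mp (h k))] at hpos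
        exact lt_irrefl 0 hpos
      obtain ⟨k, hk⟩ := hex
      have h1 : 0 < incidence y f i k := by
        rcases Nat.eq_zero_or_pos (incidence y f i k) with h | h
        · rw [h, zero_mul] at hk; exact absurd hk (lt_irrefl 0)
        · exact h
      have h2 : 0 < (incidence y f ^ p) k j := by
        rcases Nat.eq_zero_or_pos ((incidence y f ^ p) k j) with h | h
        · rw [h, mul_zero] at hk; exact absurd hk (lt_irrefl 0)
        · exact h
      calc y.interval i ⊆ f '' y.interval k := (incidence_pos_iff y f i k).mp h1
        _ ⊆ f '' (f^[p] '' y.interval j) :=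
            Set.image_mono (((IH j).1 k).mp h2)
        _ = f^[p + 1] '' y.interval j := himg.symm
    -- the singleton case, shared
    have single : ∀ c : ℝ, f^[p] '' y.interval j = {c} →
        (∀ i : Fin m,
          (0 < (incidence y f ^ (p + 1)) i j ↔
            y.interval i ⊆ f^[p + 1] '' y.interval j)) ∧
        ((∃ a b : Fin (m + 1), a ≤ b ∧
            f^[p + 1] '' y.interval j = Set.Icc (y.pts a) (y.pts b)) ∨
         (∃ c : ℝ, f^[p + 1] '' y.interval j = {c})) := by
      intro c hc
      have himg' : f^[p + 1] '' y.interval j = {f c} := by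
        rw [himg, hc, Set.image_singleton]
      constructor
      · intro i
        constructor
        · intro hpos
          exact absurd (himg' ▸ back i hpos) (y.not_subset_singleton i (f c))
        · intro hsub
          exact absurd (himg' ▸ hsub) (y.not_subset_singleton i (f c))
      · exact Or.inr ⟨f c, himg'⟩
    rcases (IH j).2 with ⟨a, b, hab, hIcc⟩ | ⟨c, hc⟩
    · rcases eq_or_lt_of_le hab with rfl | hab'
      · exact single (y.pts a) (by rw [hIcc, Set.Icc_self])
      · -- proper interval case
        choose aF bF habF hfF using hMarkov
        set S : Finset (Fin m) :=
          Finset.univ.filter (fun k : Fin m => a ≤ k.castSucc ∧ k.succ ≤ b) with hS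
        have hcover := y.icc_eq_biUnion a b hab'
        have hbm : (b : ℕ) ≤ m := Nat.lt_succ_iff.mp b.isLt
        have ham : (a : ℕ) < m := lt_of_lt_of_le hab' hbm
        have hSne : S.Nonempty := by
          refine ⟨⟨a, ham⟩, Finset.mem_filter.mpr ⟨Finset.mem_univ _, ?_, ?_⟩⟩
          · rw [Fin.le_def]; simp
          · rw [Fin.le_def]; simpa using hab'
        have hU : f '' Set.Icc (y.pts a) (y.pts b) =
            ⋃ k ∈ S, Set.Icc (y.pts (aF k)) (y.pts (bF k)) := by
          rw [hcover, Set.image_iUnion₂]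
          exact Set.iUnion₂_congr (fun k _ => hfF k)
        have hIk_sub : ∀ k ∈ S, y.interval k ⊆ f^[p] '' y.interval j := by
          intro k hk
          rw [hIcc]
          obtain ⟨_, h1, h2⟩ := Finset.mem_filter.mp hk
          exact Set.Icc_subset_Icc (y.strictMono.monotone h1) (y.strictMono.monotone h2)
        constructor
        · intro i
          refine ⟨back i, fun hsub => ?_⟩
          set x : ℝ := (y.pts i.castSucc + y.pts i.succ) / 2 with hxdef
          have hlt := y.pts_lt i
          have hx1 : y.pts i.castSucc < x := by rw [hxdef]; linarith
          have hx2 : x < y.pts i.succ := by rw [hxdef]; linarith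
          have hxmem : x ∈ f^[p + 1] '' y.interval j := hsub ⟨hx1.le, hx2.le⟩
          rw [himg, hIcc, hU] at hxmem
          simp only [Set.mem_iUnion, exists_prop] at hxmem
          obtain ⟨k, hkS, hxk⟩ := hxmem
          have h1 : aF k ≤ i.castSucc := by
            have h : y.pts (aF k) < y.pts i.succ := lt_of_le_of_lt hxk.1 hx2
            exact Fin.le_castSucc_iff.mpr (y.strictMono.lt_iff_lt.mp h)
          have h2 : i.succ ≤ bF k := by
            have h : y.pts i.castSucc < y.pts (bF k) := lt_of_lt_of_le hx1 hxk.2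
            exact Fin.castSucc_lt_iff_succ_le.mp (y.strictMono.lt_iff_lt.mp h)
          have hsubk : y.interval i ⊆ f '' y.interval k := by
            rw [hfF k]
            exact Set.Icc_subset_Icc (y.strictMono.monotone h1) (y.strictMono.monotone h2)
          have hNik : 0 < incidence y f i k := (incidence_pos_iff y f i k).mpr hsubk
          have hNkj : 0 < (incidence y f ^ p) k j := ((IH j).1 k).mpr (hIk_sub k hkS)
          rw [pow_succ', Matrix.mul_apply]
          exact lt_of_lt_of_le (Nat.mul_pos hNik hNkj)
            (Finset.single_le_sum
              (f := fun t => incidence y f i t * (incidence y f ^ p) t j)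
              (fun t _ => Nat.zero_le _) (Finset.mem_univ k))
        · left
          set A := S.inf' hSne aF with hA
          set B := S.sup' hSne bF with hB
          have hUsub : f '' Set.Icc (y.pts a) (y.pts b) ⊆
              Set.Icc (y.pts A) (y.pts B) := by
            rw [hU]
            refine Set.iUnion₂_subset fun k hk => Set.Icc_subset_Icc ?_ ?_
            · exact y.strictMono.monotone (Finset.inf'_le aF hk)
            · exact y.strictMono.monotone (Finset.le_sup' bF hk)
          have hAmem : y.pts A ∈ f '' Set.Icc (y.pts a) (y.pts b) := by
            obtain ⟨k0, hk0, hk0e⟩ := Finset.exists_mem_eq_inf' hSne aF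
            rw [hU]
            refine Set.mem_biUnion hk0 ?_
            have hAe : A = aF k0 := hA.trans hk0e
            rw [hAe]
            exact ⟨le_rfl, y.strictMono.monotone (habF k0)⟩
          have hBmem : y.pts B ∈ f '' Set.Icc (y.pts a) (y.pts b) := by
            obtain ⟨k0, hk0, hk0e⟩ := Finset.exists_mem_eq_sup' hSne bF
            rw [hU]
            refine Set.mem_biUnion hk0 ?_
            have hBe : B = bF k0 := hB.trans hk0e
            rw [hBe]
            exact ⟨y.strictMono.monotone (habF k0), le_rfl⟩
          have hICC := (hcont.mono
              (Set.Icc_subset_Icc (y.pts_mem a).1 (y.pts_mem b).2)).image_Icc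
              (y.strictMono.monotone hab'.le)
          set c := sInf (f '' Set.Icc (y.pts a) (y.pts b)) with hcdef
          set d := sSup (f '' Set.Icc (y.pts a) (y.pts b)) with hddef
          have hAcd : y.pts A ∈ Set.Icc c d := hICC ▸ hAmem
          have hBcd : y.pts B ∈ Set.Icc c d := hICC ▸ hBmem
          have hcd : c ≤ d := le_trans hAcd.1 hAcd.2
          have hcmem : c ∈ f '' Set.Icc (y.pts a) (y.pts b) := by
            rw [hICC]; exact ⟨le_rfl, hcd⟩
          have hdmem : d ∈ f '' Set.Icc (y.pts a) (y.pts b) := by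
            rw [hICC]; exact ⟨hcd, le_rfl⟩
          have hcA : c = y.pts A := le_antisymm hAcd.1 (hUsub hcmem).1
          have hdB : d = y.pts B := le_antisymm (hUsub hdmem).2 hBcd.2
          have hAB : A ≤ B := y.strictMono.le_iff_le.mp (hcA ▸ hdB ▸ hcd)
          exact ⟨A, B, hAB, by rw [himg, hIcc, hICC, hcA, hdB]⟩
    · exact single c hc

theorem incidence_pow_column_pos_iff_onto
    (m : ℕ) (hm : 1 ≤ m) (y : UnitPartition m) (f : ℝ → ℝ)
    (hmaps : Set.MapsTo f (Set.Icc 0 1) (Set.Icc 0 1))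
    (hcont : ContinuousOn f (Set.Icc 0 1))
    (hMarkov : IsMarkov y f) :
    ∀ p : ℕ, 1 ≤ p → ∀ j : Fin m,
      (∀ i : Fin m, 0 < (incidence y f ^ p) i j) ↔
        f^[p] '' y.interval j = Set.Icc (0 : ℝ) 1 := by
  intro p hp j
  obtain ⟨hiff, _⟩ := key_lemma y f hcont hMarkov p hp j
  have hzl : (0 : Fin (m + 1)) < Fin.last m := by
    rw [Fin.lt_def]
    simpa using Nat.lt_of_lt_of_le Nat.zero_lt_one hm
  have hcov : Set.Icc (0 : ℝ) 1 =
      ⋃ k ∈ Finset.univ.filter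
        (fun k : Fin m => (0 : Fin (m + 1)) ≤ k.castSucc ∧ k.succ ≤ Fin.last m),
        y.interval k := by
    have := y.icc_eq_biUnion 0 (Fin.last m) hzl
    rwa [y.zero, y.one] at this
  constructor
  · intro h
    apply Set.Subset.antisymm
    · exact (((hmaps.iterate p).mono (y.interval_subset j) Set.Subset.rfl)).image_subset
    · intro x hx
      rw [hcov] at hx
      simp only [Set.mem_iUnion, exists_prop] at hx
      obtain ⟨i, _, hxi⟩ := hx
      exact (hiff i).mp (h i) hxi
  · intro h i
    exact (hiff i).mpr (h ▸ y.interval_subset i)
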